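/- Under the hypotheses of Proposition 1 (existence of D₁, D₂, 0 ≤ L₁ < L₂ ≤ ∞, continuous Φ with (2.2), β ∈ K with (2.3)), set β̄ := 2β. Then for every σ > 0 there exist a lower semicontinuous map T : D₂ \ D₁ → (0, ∞) with T(x) ≤ σ for all x ∈ D₂ \ D₁, and a map q̄ : D₂ \ D₁ → (0, ∞) with liminf_{x→a} q̄(x) > 0 for every a ∈ D₂ \ D₁, such that for every x ∈ D₂ \ D₁ there exists a control u_x : [0, T(x)] → ℝ^ℓ with Φ(π(T(x), 0, x, u_x)) ≤ Φ(x) − q̄(x) and Φ(π(t, 0, x, u_x)) ≤ β̄(Φ(x)) for all t ∈ [0, T(x)]. -/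

import Mathlib

open MeasureTheory Filter Set

set_option maxHeartbeats 1000000

noncomputable section

/-- A function of class `K`: continuous, strictly increasing on `[0,∞)` and vanishing at `0`. -/
def IsClassK (φ : ℝ → ℝ) : Prop :=
  ContinuousOn φ (Set.Ici 0) ∧ StrictMonoOn φ (Set.Ici 0) ∧ φ 0 = 0

section Auxiliary

variable {n l : ℕ}

private lemma lipFst {K : NNReal} {F : EuclideanSpace ℝ (Fin n) → EuclideanSpace ℝ (Fin l) → EuclideanSpace ℝ (Fin n)}
    (hK : LipschitzWith K (Function.uncurry F)) (u : EuclideanSpace ℝ (Fin l)) :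
    LipschitzWith K (fun x => F x u) := by
  have := hK.comp (LipschitzWith.prodMk_right (α := EuclideanSpace ℝ (Fin n)) u)
  rw [mul_one] at this
  exact this

private lemma lipSnd {K : NNReal} {F : EuclideanSpace ℝ (Fin n) → EuclideanSpace ℝ (Fin l) → EuclideanSpace ℝ (Fin n)}
    (hK : LipschitzWith K (Function.uncurry F)) (x : EuclideanSpace ℝ (Fin n)) :
    LipschitzWith K (fun u => F x u) := by
  have := hK.comp (LipschitzWith.prodMk_left (β := EuclideanSpace ℝ (Fin l)) x)
  rw [mul_one] at this
  exact this

/-- Grönwall, integral form. -/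
private lemma gronwall_integral {f : ℝ → ℝ} {τ Kr c : ℝ} (hK : 0 ≤ Kr) (hc : 0 ≤ c)
    (hf : ContinuousOn f (Icc 0 τ)) (hnn : ∀ t ∈ Icc (0:ℝ) τ, 0 ≤ f t)
    (hineq : ∀ t ∈ Icc (0:ℝ) τ, f t ≤ c + Kr * ∫ r in (0:ℝ)..t, f r) :
    ∀ t ∈ Icc (0:ℝ) τ, f t ≤ c * Real.exp (Kr * t) := by
  rcases le_or_gt τ 0 with hτ | hτ
  · intro t ht
    have h0τ : (0:ℝ) ≤ τ := le_trans ht.1 ht.2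
    have ht0 : t = 0 := le_antisymm (ht.2.trans hτ) ht.1
    subst ht0
    have := hineq 0 ⟨le_rfl, h0τ⟩
    simpa using this
  have hfi : IntegrableOn f (Icc 0 τ) := hf.integrableOn_compact isCompact_Icc
  set ψ : ℝ → ℝ := fun t => c + Kr * ∫ r in (0:ℝ)..t, f r with hψ
  have hprim : ContinuousOn (fun t => ∫ r in (0:ℝ)..t, f r) (Icc 0 τ) := by
    have h1 : IntegrableOn f (uIcc 0 τ) := by rwa [uIcc_of_le hτ.le]
    have := intervalIntegral.continuousOn_primitive_interval (a := 0) (b := τ) (f := f) h1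
    rwa [uIcc_of_le hτ.le] at this
  have hψcont : ContinuousOn ψ (Icc 0 τ) :=
    continuousOn_const.add (continuousOn_const.mul hprim)
  have hfψ : ∀ t ∈ Icc (0:ℝ) τ, f t ≤ ψ t := hineq
  have hψnn : ∀ t ∈ Icc (0:ℝ) τ, 0 ≤ ψ t := fun t ht => (hnn t ht).trans (hfψ t ht)
  have hderiv : ∀ t ∈ Ico (0:ℝ) τ, HasDerivWithinAt ψ (Kr * f t) (Ici t) t := by
    intro t ht
    have hti : IntervalIntegrable f volume 0 t := by
      apply IntegrableOn.intervalIntegrable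
      rw [uIcc_of_le ht.1]
      exact hfi.mono_set (Icc_subset_Icc le_rfl ht.2.le)
    have hmono : Icc (0:ℝ) τ ∈ nhdsWithin t (Ici t) := by
      apply mem_nhdsWithin.2
      exact ⟨Iio τ, isOpen_Iio, ht.2, by
        rintro w ⟨hw1, hw2⟩
        exact ⟨le_trans ht.1 hw2, le_of_lt hw1⟩⟩
    have hmono' : Icc (0:ℝ) τ ∈ nhdsWithin t (Ioi t) :=
      nhdsWithin_mono t Ioi_subset_Ici_self hmono
    have hP : HasDerivWithinAt (fun u => ∫ r in (0:ℝ)..u, f r) (f t) (Ici t) t := by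
      apply intervalIntegral.integral_hasDerivWithinAt_right hti
        ⟨Icc 0 τ, hmono', hfi.aestronglyMeasurable⟩
      exact (hf t ⟨ht.1, ht.2.le⟩).mono_of_mem_nhdsWithin hmono'
    exact (hP.const_mul Kr).const_add c
  have key := norm_le_gronwallBound_of_norm_deriv_right_le (δ := c) (K := Kr) (ε := 0)
    (f := ψ) (f' := fun t => Kr * f t) (a := 0) (b := τ) hψcont hderiv
    (by simp [hψ, Real.norm_eq_abs, abs_of_nonneg hc])
    (by
      intro t ht
      have h1 : ‖Kr * f t‖ = Kr * f t := by
        have := hnn t ⟨ht.1, ht.2.le⟩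
        rw [Real.norm_eq_abs, abs_of_nonneg (mul_nonneg hK this)]
      have h2 : ‖ψ t‖ = ψ t := by
        rw [Real.norm_eq_abs, abs_of_nonneg (hψnn t ⟨ht.1, ht.2.le⟩)]
      rw [h1, h2]
      have := hfψ t ⟨ht.1, ht.2.le⟩
      nlinarith [mul_le_mul_of_nonneg_left this hK])
  intro t ht
  have := key t ht
  rw [Real.norm_eq_abs, abs_of_nonneg (hψnn t ht), gronwallBound_ε0] at this
  calc f t ≤ ψ t := hfψ t ht
  _ ≤ c * Real.exp (Kr * (t - 0)) := this
  _ = c * Real.exp (Kr * t) := by ring_nf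

/-- Existence of a solution of `z' = F z (v t)`, `z 0 = y`, on `[0,τ]` with `K τ ≤ 1/2`,
together with the integral equation. -/
private lemma solve_ode {K : NNReal}
    {F : EuclideanSpace ℝ (Fin n) → EuclideanSpace ℝ (Fin l) → EuclideanSpace ℝ (Fin n)}
    (hK : LipschitzWith K (Function.uncurry F)) {v : ℝ → EuclideanSpace ℝ (Fin l)}
    (hv : Continuous v) {τ : ℝ} (hτ : 0 < τ) (hsmall : (K:ℝ) * τ ≤ 1/2)
    (y : EuclideanSpace ℝ (Fin n)) :
    ∃ z : ℝ → EuclideanSpace ℝ (Fin n), z 0 = y ∧ ContinuousOn z (Icc 0 τ) ∧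
      ∀ t ∈ Icc (0:ℝ) τ, z t = y + ∫ r in (0:ℝ)..t, F (z r) (v r) := by
  -- the time-dependent field
  set f : ℝ → EuclideanSpace ℝ (Fin n) → EuclideanSpace ℝ (Fin n) :=
    fun t x => F x (v t) with hf
  have hflip : ∀ t, LipschitzWith K (f t) := fun t => lipFst hK (v t)
  -- bound on the field along the constant `y`
  obtain ⟨M, hM⟩ : ∃ M, ∀ t ∈ Icc (0:ℝ) τ, ‖f t y‖ ≤ M := by
    obtain ⟨M, hM⟩ := (isCompact_Icc (a := (0:ℝ)) (b := τ)).exists_bound_of_continuousOn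
      (f := fun t => f t y)
      (((hK.continuous).comp (continuous_const.prodMk hv)).continuousOn)
    exact ⟨M, hM⟩
  have hM0 : 0 ≤ M := le_trans (norm_nonneg _) (hM 0 ⟨le_rfl, hτ.le⟩)
  set R : ℝ := 2 * M * τ + 1 with hR
  have hRpos : (0:ℝ) < R := by positivity
  set C : ℝ := M + K * R with hC
  have hC0 : (0:ℝ) ≤ C := by positivity
  have hpl : IsPicardLindelof f (tmin := 0) (tmax := τ) ⟨0, le_rfl, hτ.le⟩ y
      ⟨R, hRpos.le⟩ 0 ⟨C, hC0⟩ K := by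
    constructor
    · exact fun t _ => (hflip t).lipschitzOnWith
    · intro x _
      exact ((hK.continuous).comp (continuous_const.prodMk hv)).continuousOn
    · intro t ht x hx
      have e1 : f t x = f t y + (f t x - f t y) := by abel
      show ‖f t x‖ ≤ C
      calc ‖f t x‖ ≤ ‖f t y‖ + ‖f t x - f t y‖ := by
            rw [e1]; exact (norm_add_le _ _).trans (by rw [← e1])
      _ ≤ M + K * R := by
            have h2 : ‖f t x - f t y‖ ≤ (K:ℝ) * ‖x - y‖ := by
              simpa [dist_eq_norm] using (hflip t).dist_le_mul x y
            have h3 : ‖x - y‖ ≤ R := by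
              simpa [dist_eq_norm] using (show dist x y ≤ R from hx)
            have h4 : (K:ℝ) * ‖x - y‖ ≤ (K:ℝ) * R :=
              mul_le_mul_of_nonneg_left h3 K.2
            exact add_le_add (hM t ht) (h2.trans h4)
    · have hmax : max (τ - 0) (0 - 0) = τ := by
        rw [sub_zero, sub_zero, max_eq_left hτ.le]
      simp only [NNReal.coe_mk, NNReal.coe_zero, tsub_zero]
      rw [max_eq_left hτ.le]
      show C * τ ≤ R
      have h5 : (K:ℝ) * τ * R ≤ (1/2) * R := mul_le_mul_of_nonneg_right hsmall hRpos.le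
      have h6 : C * τ = M * τ + (K:ℝ) * τ * R := by rw [hC]; ring
      rw [h6, hR]
      nlinarith
  obtain ⟨z, hz0', hzd⟩ := hpl.exists_eq_forall_mem_Icc_hasDerivWithinAt₀
  have hz0 : z 0 = y := hz0'
  have hzc : ContinuousOn z (Icc 0 τ) := fun t ht => (hzd t ht).continuousWithinAt
  refine ⟨z, hz0, hzc, ?_⟩
  intro t ht
  have hcont : ContinuousOn (fun r => F (z r) (v r)) (Icc 0 τ) := by
    have h := (hK.continuous).comp_continuousOn' (hzc.prodMk hv.continuousOn)
    exact h
  have hint : IntervalIntegrable (fun r => F (z r) (v r)) volume 0 t := by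
    apply ContinuousOn.intervalIntegrable
    rw [uIcc_of_le ht.1]
    exact hcont.mono (Icc_subset_Icc le_rfl ht.2)
  have heq : ∫ r in (0:ℝ)..t, F (z r) (v r) = z t - z 0 := by
    apply intervalIntegral.integral_eq_sub_of_hasDeriv_right
    · rw [uIcc_of_le ht.1]
      exact hzc.mono (Icc_subset_Icc le_rfl ht.2)
    · intro x hx
      rw [min_def, max_def] at hx
      split_ifs at hx with h1
      · -- 0 ≤ t
        have hx' : x ∈ Ioo (0:ℝ) t := by simpa [ht.1] using hx
        have hmem : Icc (0:ℝ) τ ∈ nhdsWithin x (Ioi x) := by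
          apply mem_nhdsWithin.2
          exact ⟨Iio τ, isOpen_Iio, lt_of_lt_of_le hx'.2 ht.2, by
            rintro w ⟨hw1, hw2⟩
            exact ⟨le_trans hx'.1.le hw2.le, hw1.le⟩⟩
        exact (hzd x ⟨hx'.1.le, hx'.2.le.trans ht.2⟩).mono_of_mem_nhdsWithin hmem
      · exact absurd ht.1 h1
    · exact hint
  rw [heq, hz0]
  abel

/-- Approximate an (a priori non-measurable) control along a trajectory by a continuous one,
in the `L¹` sense of the resulting vector fields. -/
private lemma approx_control {K : NNReal}
    {F : EuclideanSpace ℝ (Fin n) → EuclideanSpace ℝ (Fin l) → EuclideanSpace ℝ (Fin n)}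
    (hK : LipschitzWith K (Function.uncurry F))
    {π : ℝ → EuclideanSpace ℝ (Fin n)} (hπ : Continuous π)
    {g : ℝ → EuclideanSpace ℝ (Fin n)} {τ : ℝ} (hτ : 0 < τ)
    (hg : IntegrableOn g (Ioc 0 τ))
    (himg : ∀ t ∈ Ioc (0:ℝ) τ, ∃ u, F (π t) u = g t)
    {ε : ℝ} (hε : 0 < ε) :
    ∃ v : ℝ → EuclideanSpace ℝ (Fin l), Continuous v ∧
      ∫ t in Ioc (0:ℝ) τ, ‖F (π t) (v t) - g t‖ ≤ ε := by
  classical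
  set μ := volume.restrict (Ioc (0:ℝ) τ) with hμ
  haveI : IsFiniteMeasure μ := by
    constructor
    rw [hμ, Measure.restrict_apply_univ]
    exact measure_Ioc_lt_top
  have hμτ : (μ univ).toReal ≤ τ := by
    rw [hμ, Measure.restrict_apply_univ, Real.volume_Ioc]
    rw [ENNReal.toReal_ofReal (by linarith)]
    linarith
  -- measurable version of g
  have hgm : AEStronglyMeasurable g μ := hg.aestronglyMeasurable
  set g' : ℝ → EuclideanSpace ℝ (Fin n) := hgm.mk g with hg'def
  have hg'sm : StronglyMeasurable g' := hgm.stronglyMeasurable_mk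
  have hgg' : g =ᵐ[μ] g' := hgm.ae_eq_mk
  have hg'i : Integrable g' μ := hg.congr hgg'
  -- dense sequence in the control space
  obtain ⟨e, he⟩ := TopologicalSpace.exists_dense_seq (EuclideanSpace ℝ (Fin l))
  -- three small constants
  set ε₁ : ℝ := ε / (3 * (τ + 1)) with hε₁
  set ε₂ : ℝ := ε / 3 with hε₂
  set ε₃ : ℝ := ε / (3 * ((K:ℝ) + 1)) with hε₃
  have hε₁pos : 0 < ε₁ := by positivity
  have hε₂pos : 0 < ε₂ := by positivity
  have hε₃pos : 0 < ε₃ := by positivity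
  -- the selection predicate
  set P : ℕ → ℝ → Prop := fun m t => ‖F (π t) (e m) - g' t‖ < ε₁ with hP
  set P' : ℕ → ℝ → Prop := fun m t => P m t ∨ (m = 0 ∧ ∀ j, ¬ P j t) with hP'
  have htot : ∀ t, ∃ m, P' m t := by
    intro t
    by_cases h : ∃ j, P j t
    · obtain ⟨j, hj⟩ := h; exact ⟨j, Or.inl hj⟩
    · exact ⟨0, Or.inr ⟨rfl, fun j hj => h ⟨j, hj⟩⟩⟩
  have hPmeas : ∀ m, MeasurableSet {t | P m t} := by
    intro m
    have hc : Measurable fun t => ‖F (π t) (e m) - g' t‖ := by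
      apply Measurable.norm
      exact (((hK.continuous.comp (hπ.prodMk continuous_const)).measurable)).sub
        hg'sm.measurable
    exact measurableSet_lt hc measurable_const
  have hP'meas : ∀ m, MeasurableSet {t | P' m t} := by
    intro m
    by_cases hm : m = 0
    · subst hm
      have he0 : {t : ℝ | P' 0 t} = {t | P 0 t} ∪ ⋂ j, {t | P j t}ᶜ := by
        ext t; simp [hP']
      rw [he0]
      exact (hPmeas 0).union (MeasurableSet.iInter fun j => (hPmeas j).compl)
    · have hem : {t : ℝ | P' m t} = {t | P m t} := by
        ext t; simp [hP', hm]
      rw [hem]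
      exact hPmeas m
  -- the selected control and its truncations
  set w : ℝ → EuclideanSpace ℝ (Fin l) := fun t => e (Nat.find (htot t)) with hw
  have hwmeas : Measurable w :=
    Measurable.find (f := fun m (_ : ℝ) => e m) (fun m => measurable_const) hP'meas htot
  set wN : ℕ → ℝ → EuclideanSpace ℝ (Fin l) :=
    fun N t => if Nat.find (htot t) ≤ N then e (Nat.find (htot t)) else e 0 with hwN
  have hwNmeas : ∀ N, Measurable (wN N) := by
    intro N
    exact Measurable.find (f := fun m (_ : ℝ) => if m ≤ N then e m else e 0)
      (fun m => measurable_const) hP'meas htot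
  -- the good points
  have hgood : ∀ᵐ t ∂μ, t ∈ Ioc (0:ℝ) τ ∧ g t = g' t := by
    filter_upwards [ae_restrict_mem measurableSet_Ioc, hgg'] with t h1 h2
    exact ⟨h1, h2⟩
  have hwP : ∀ t, t ∈ Ioc (0:ℝ) τ → g t = g' t → P (Nat.find (htot t)) t := by
    intro t ht hgt
    obtain ⟨u, hu⟩ := himg t ht
    have hEx : ∃ j, P j t := by
      obtain ⟨m, hm⟩ := Metric.denseRange_iff.1 he u (ε₁ / ((K:ℝ) + 1)) (by positivity)
      rw [dist_comm] at hm
      refine ⟨m, ?_⟩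
      have : ‖F (π t) (e m) - g' t‖ = ‖F (π t) (e m) - F (π t) u‖ := by
        rw [hu, hgt]
      rw [hP]
      simp only
      rw [this]
      have hL : ‖F (π t) (e m) - F (π t) u‖ ≤ (K:ℝ) * dist (e m) u := by
        simpa [dist_eq_norm] using (lipSnd hK (π t)).dist_le_mul (e m) u
      have : (K:ℝ) * dist (e m) u < ((K:ℝ) + 1) * (ε₁ / ((K:ℝ) + 1)) := by
        have hK0 : (0:ℝ) ≤ (K:ℝ) := K.2
        have hq : (0:ℝ) < ε₁ / ((K:ℝ) + 1) := by positivity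
        have h5 : 0 ≤ (K:ℝ) * (ε₁ / ((K:ℝ) + 1) - dist (e m) u) :=
          mul_nonneg hK0 (by linarith)
        nlinarith
      have hcalc : ((K:ℝ) + 1) * (ε₁ / ((K:ℝ) + 1)) = ε₁ := by field_simp
      linarith [hL]
    have hfind := Nat.find_spec (htot t)
    rcases hfind with h | h
    · exact h
    · exact absurd hEx (by push_neg; exact fun j => h.2 j)
  have haeP : ∀ᵐ t ∂μ, ‖F (π t) (w t) - g' t‖ < ε₁ := by
    filter_upwards [hgood] with t ⟨h1, h2⟩
    exact hwP t h1 h2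
  -- integrability facts
  have hFcont : ∀ (c : EuclideanSpace ℝ (Fin l)), Continuous fun t => F (π t) c :=
    fun c => hK.continuous.comp (hπ.prodMk continuous_const)
  have hFc_int : ∀ (c : EuclideanSpace ℝ (Fin l)), Integrable (fun t => F (π t) c) μ := by
    intro c
    rw [hμ]
    exact (hFcont c).integrableOn_Ioc
  have hG : Integrable (fun t => ‖F (π t) (e 0) - g' t‖) μ :=
    ((hFc_int (e 0)).sub hg'i).norm
  -- `F (π t) (w t)` etc. are ae strongly measurable
  have hFw_meas : ∀ (u' : ℝ → EuclideanSpace ℝ (Fin l)), Measurable u' →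
      Measurable fun t => F (π t) (u' t) := by
    intro u' hu'
    exact hK.continuous.measurable.comp (hπ.measurable.prodMk hu')
  -- ∫ ‖F(π)(w) - g'‖ ≤ ε₁ τ
  have hterm1 : Integrable (fun t => ‖F (π t) (w t) - g' t‖) μ := by
    apply Integrable.mono' (integrable_const ε₁)
    · exact (((hFw_meas w hwmeas).sub hg'sm.measurable).norm).aestronglyMeasurable
    · filter_upwards [haeP] with t ht
      rw [Real.norm_eq_abs, abs_of_nonneg (norm_nonneg _)]
      exact ht.le
  have hint1 : ∫ t, ‖F (π t) (w t) - g' t‖ ∂μ ≤ ε₁ * τ := by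
    calc ∫ t, ‖F (π t) (w t) - g' t‖ ∂μ ≤ ∫ _, ε₁ ∂μ := by
          apply integral_mono_ae hterm1 (integrable_const _)
          filter_upwards [haeP] with t ht using ht.le
    _ = (μ univ).toReal * ε₁ := by rw [integral_const, smul_eq_mul]; rfl
    _ ≤ ε₁ * τ := by
          rw [mul_comm]
          exact mul_le_mul_of_nonneg_left hμτ hε₁pos.le
  -- dominated convergence for the truncation error
  set H : ℕ → ℝ → ℝ := fun N t => ‖F (π t) (wN N t) - F (π t) (w t)‖ with hH
  have hHmeas : ∀ N, Measurable (H N) :=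
    fun N => ((hFw_meas _ (hwNmeas N)).sub (hFw_meas _ hwmeas)).norm
  have hwNw : ∀ N t, Nat.find (htot t) ≤ N → wN N t = w t := by
    intro N t hc
    rw [hwN, hw]
    simp [hc]
  have hwNe0 : ∀ N t, ¬ Nat.find (htot t) ≤ N → wN N t = e 0 := by
    intro N t hc
    rw [hwN]
    simp [hc]
  have hHbound : ∀ N, ∀ᵐ t ∂μ, ‖H N t‖ ≤ ‖F (π t) (e 0) - g' t‖ + 2 * ε₁ := by
    intro N
    filter_upwards [haeP] with t ht
    have habs : ‖H N t‖ = H N t := Real.norm_of_nonneg (norm_nonneg _)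
    rw [habs]
    show ‖F (π t) (wN N t) - F (π t) (w t)‖ ≤ _
    by_cases hc : Nat.find (htot t) ≤ N
    · rw [hwNw N t hc]
      simp only [sub_self, norm_zero]
      positivity
    · rw [hwNe0 N t hc]
      have h4 : ‖F (π t) (e 0) - F (π t) (w t)‖ ≤
          ‖F (π t) (e 0) - g' t‖ + ‖F (π t) (w t) - g' t‖ := by
        have h3 : F (π t) (e 0) - F (π t) (w t) =
            (F (π t) (e 0) - g' t) - (F (π t) (w t) - g' t) := by abel
        rw [h3]
        exact norm_sub_le _ _
      linarith [ht.le]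
  have hHlim : ∀ᵐ t ∂μ, Tendsto (fun N => H N t) atTop (nhds 0) := by
    refine Eventually.of_forall fun t => ?_
    have hconst : ∀ N ≥ Nat.find (htot t), H N t = 0 := by
      intro N hN
      show ‖F (π t) (wN N t) - F (π t) (w t)‖ = 0
      rw [hwNw N t hN]
      simp
    exact tendsto_atTop_of_eventually_const hconst
  have hHint : ∀ N, Integrable (H N) μ := by
    intro N
    apply Integrable.mono' (hG.add (integrable_const (2 * ε₁)))
    · exact ((hHmeas N)).aestronglyMeasurable
    · exact hHbound N
  have hHtend : Tendsto (fun N => ∫ t, H N t ∂μ) atTop (nhds 0) := by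
    have := MeasureTheory.tendsto_integral_of_dominated_convergence
      (F := H) (f := fun _ => (0:ℝ)) (bound := fun t => ‖F (π t) (e 0) - g' t‖ + 2 * ε₁)
      (fun N => (hHmeas N).aestronglyMeasurable)
      (hG.add (integrable_const (2 * ε₁)))
      hHbound hHlim
    simpa using this
  obtain ⟨N, hN⟩ : ∃ N, ∫ t, H N t ∂μ ≤ ε₂ := by
    have := (hHtend.eventually (eventually_le_nhds hε₂pos)).exists
    simpa using this
  -- wN N is bounded, hence integrable
  set B : ℝ := Finset.sup' (Finset.range (N + 1)) (by simp) (fun m => ‖e m‖) with hB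
  have hwNbd : ∀ t, ‖wN N t‖ ≤ B := by
    intro t
    by_cases hc : Nat.find (htot t) ≤ N
    · rw [hwNw N t hc, hw]
      exact Finset.le_sup' (fun m => ‖e m‖) (Finset.mem_range.2 (Nat.lt_succ_of_le hc))
    · rw [hwNe0 N t hc]
      exact Finset.le_sup' (fun m => ‖e m‖) (Finset.mem_range.2 (Nat.succ_pos N))
  have hwNint : IntegrableOn (wN N) (Ioc 0 τ) := by
    apply Integrable.mono' (integrable_const B)
    · exact (hwNmeas N).aestronglyMeasurable
    · exact Eventually.of_forall hwNbd
  -- continuous approximation of wN N in L¹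
  have hind : Integrable ((Ioc (0:ℝ) τ).indicator (wN N)) volume :=
    hwNint.integrable_indicator measurableSet_Ioc
  obtain ⟨v, hvsupp, hverr, hvcont, hvint⟩ :=
    hind.exists_hasCompactSupport_integral_sub_le hε₃pos
  refine ⟨v, hvcont, ?_⟩
  -- transfer the L¹ error to the set `Ioc 0 τ`
  have hvw : ∫ t, ‖wN N t - v t‖ ∂μ ≤ ε₃ := by
    have heq : ∀ t ∈ Ioc (0:ℝ) τ, ‖wN N t - v t‖ =
        ‖(Ioc (0:ℝ) τ).indicator (wN N) t - v t‖ := by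
      intro t ht
      rw [indicator_of_mem ht]
    calc ∫ t, ‖wN N t - v t‖ ∂μ
        = ∫ t in Ioc (0:ℝ) τ, ‖(Ioc (0:ℝ) τ).indicator (wN N) t - v t‖ := by
          rw [hμ]
          apply setIntegral_congr_fun measurableSet_Ioc heq
    _ ≤ ∫ t, ‖(Ioc (0:ℝ) τ).indicator (wN N) t - v t‖ := by
          apply setIntegral_le_integral ((hind.sub hvint).norm)
          exact Eventually.of_forall fun t => norm_nonneg _
    _ ≤ ε₃ := hverr
  -- integrability of the remaining pieces
  have hvμ : Integrable v μ := by rw [hμ]; exact hvcont.integrableOn_Ioc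
  have hwNμ : Integrable (wN N) μ := by rw [hμ]; exact hwNint
  have hKvw : Integrable (fun t => (K:ℝ) * ‖v t - wN N t‖) μ :=
    ((hvμ.sub hwNμ).norm.const_mul _)
  have hterm3 : Integrable (fun t => ‖F (π t) (v t) - F (π t) (wN N t)‖) μ := by
    apply Integrable.mono' hKvw
    · exact ((hFw_meas v hvcont.measurable).sub
        (hFw_meas _ (hwNmeas N))).norm.aestronglyMeasurable
    · refine Eventually.of_forall fun t => ?_
      rw [Real.norm_of_nonneg (norm_nonneg _)]
      simpa [dist_eq_norm] using (lipSnd hK (π t)).dist_le_mul (v t) (wN N t)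
  have hint3 : ∫ t, ‖F (π t) (v t) - F (π t) (wN N t)‖ ∂μ ≤ (K:ℝ) * ε₃ := by
    calc ∫ t, ‖F (π t) (v t) - F (π t) (wN N t)‖ ∂μ
        ≤ ∫ t, (K:ℝ) * ‖v t - wN N t‖ ∂μ := by
          apply integral_mono_ae hterm3 hKvw
          refine Eventually.of_forall fun t => ?_
          simpa [dist_eq_norm] using (lipSnd hK (π t)).dist_le_mul (v t) (wN N t)
    _ = (K:ℝ) * ∫ t, ‖v t - wN N t‖ ∂μ := by rw [MeasureTheory.integral_const_mul]
    _ ≤ (K:ℝ) * ε₃ := by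
          apply mul_le_mul_of_nonneg_left _ K.2
          calc ∫ t, ‖v t - wN N t‖ ∂μ = ∫ t, ‖wN N t - v t‖ ∂μ := by
                simp_rw [norm_sub_rev]
          _ ≤ ε₃ := hvw
  -- final assembly
  have hfinal : ∫ t in Ioc (0:ℝ) τ, ‖F (π t) (v t) - g t‖ =
      ∫ t, ‖F (π t) (v t) - g' t‖ ∂μ := by
    rw [hμ]
    apply integral_congr_ae
    filter_upwards [hgg'] with t ht
    rw [ht]
  rw [hfinal]
  have htri : ∀ t, ‖F (π t) (v t) - g' t‖ ≤
      ‖F (π t) (v t) - F (π t) (wN N t)‖ + (H N t + ‖F (π t) (w t) - g' t‖) := by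
    intro t
    have h3 : F (π t) (v t) - g' t =
        (F (π t) (v t) - F (π t) (wN N t)) + ((F (π t) (wN N t) - F (π t) (w t)) +
          (F (π t) (w t) - g' t)) := by abel
    rw [h3]
    exact (norm_add_le _ _).trans (add_le_add le_rfl (norm_add_le _ _))
  have hlhs_int : Integrable (fun t => ‖F (π t) (v t) - g' t‖) μ := by
    apply Integrable.mono' (hterm3.add ((hHint N).add hterm1))
    · exact (((hFw_meas v hvcont.measurable).sub hg'sm.measurable).norm).aestronglyMeasurable
    · refine Eventually.of_forall fun t => ?_
      rw [Real.norm_of_nonneg (norm_nonneg _)]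
      exact htri t
  calc ∫ t, ‖F (π t) (v t) - g' t‖ ∂μ
      ≤ ∫ t, (‖F (π t) (v t) - F (π t) (wN N t)‖ + (H N t + ‖F (π t) (w t) - g' t‖)) ∂μ := by
        apply integral_mono_ae hlhs_int (hterm3.add ((hHint N).add hterm1))
        exact Eventually.of_forall htri
  _ = (∫ t, ‖F (π t) (v t) - F (π t) (wN N t)‖ ∂μ) +
      ((∫ t, H N t ∂μ) + ∫ t, ‖F (π t) (w t) - g' t‖ ∂μ) := by
        have h1 := integral_add (μ := μ) hterm3 ((hHint N).add hterm1)
        have h2 := integral_add (μ := μ) (hHint N) hterm1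
        simp only [Pi.add_apply] at h1 h2 ⊢
        rw [h1, h2]
  _ ≤ (K:ℝ) * ε₃ + (ε₂ + ε₁ * τ) := by
        exact add_le_add hint3 (add_le_add hN hint1)
  _ ≤ ε := by
        have hA : (K:ℝ) * ε₃ ≤ ε / 3 := by
          rw [hε₃, mul_comm, div_mul_eq_mul_div,
            div_le_div_iff₀ (by positivity) (by norm_num : (0:ℝ) < 3)]
          nlinarith [K.2, hε.le]
        have hB : ε₁ * τ ≤ ε / 3 := by
          rw [hε₁, div_mul_eq_mul_div,
            div_le_div_iff₀ (by positivity) (by norm_num : (0:ℝ) < 3)]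
          nlinarith [hε.le, hτ.le]
        rw [hε₂]
        linarith

/-- The key pointwise-to-local step: a single (possibly wild) control steering `a` can be
replaced, for every `y` near `a`, by a continuous control steering `y` with almost the
same effect on `Φ`. -/
private lemma key_point {K : NNReal}
    {F : EuclideanSpace ℝ (Fin n) → EuclideanSpace ℝ (Fin l) → EuclideanSpace ℝ (Fin n)}
    (hK : LipschitzWith K (Function.uncurry F))
    {Φ : EuclideanSpace ℝ (Fin n) → ℝ} (hΦcont : Continuous Φ)
    {β : ℝ → ℝ} (hβΦ : Continuous fun x => β (Φ x))
    {τ : ℝ} {a : EuclideanSpace ℝ (Fin n)} (hτ0 : 0 < τ) (hsmall : (K:ℝ) * τ ≤ 1/2)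
    {u₀ : ℝ → EuclideanSpace ℝ (Fin l)} {π₀ : ℝ → EuclideanSpace ℝ (Fin n)}
    (hπ00 : π₀ 0 = a)
    (heq : ∀ t ∈ Icc (0:ℝ) τ, π₀ t = a + ∫ r in (0:ℝ)..t, F (π₀ r) (u₀ r))
    (hdec : Φ (π₀ τ) < Φ a)
    (hbd : ∀ t ∈ Icc (0:ℝ) τ, Φ (π₀ t) ≤ β (Φ a))
    (hβa : 0 < β (Φ a)) :
    ∃ q > (0:ℝ), ∃ ρ > (0:ℝ), ∀ y, dist y a < ρ →
      ∃ v : ℝ → EuclideanSpace ℝ (Fin l), ∃ z : ℝ → EuclideanSpace ℝ (Fin n),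
        z 0 = y ∧ (∀ t ∈ Icc (0:ℝ) τ, z t = y + ∫ r in (0:ℝ)..t, F (z r) (v r)) ∧
        Φ (z τ) ≤ Φ y - q ∧ ∀ t ∈ Icc (0:ℝ) τ, Φ (z t) ≤ 2 * β (Φ y) := by
  classical
  set g : ℝ → EuclideanSpace ℝ (Fin n) := fun r => F (π₀ r) (u₀ r) with hg
  -- the integrand along the given trajectory must be integrable
  have hgI : IntervalIntegrable g volume 0 τ := by
    by_contra hcon
    have h0 : ∫ r in (0:ℝ)..τ, g r = 0 := intervalIntegral.integral_undef hcon
    have := heq τ ⟨hτ0.le, le_rfl⟩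
    rw [h0, add_zero] at this
    rw [this] at hdec
    exact lt_irrefl _ hdec
  have hgIoc : IntegrableOn g (Ioc 0 τ) := by
    rwa [intervalIntegrable_iff_integrableOn_Ioc_of_le hτ0.le] at hgI
  -- continuity of the given trajectory
  have hπ₀cont : ContinuousOn π₀ (Icc 0 τ) := by
    have hIcc : IntegrableOn g (Icc 0 τ) := by
      rwa [integrableOn_Icc_iff_integrableOn_Ioc]
    have hprim : ContinuousOn (fun t => a + ∫ r in (0:ℝ)..t, g r) (Icc 0 τ) := by
      apply continuousOn_const.add
      have h1 : IntegrableOn g (uIcc 0 τ) := by rwa [uIcc_of_le hτ0.le]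
      have := intervalIntegral.continuousOn_primitive_interval (a := 0) (b := τ) (f := g) h1
      rwa [uIcc_of_le hτ0.le] at this
    exact hprim.congr heq
  -- clamped (hence globally continuous) version of the trajectory
  set clamp : ℝ → ℝ := fun t => max 0 (min t τ) with hclampdef
  have hclampmem : ∀ t, clamp t ∈ Icc (0:ℝ) τ :=
    fun t => ⟨le_max_left _ _, max_le hτ0.le (min_le_right _ _)⟩
  have hclampeq : ∀ t ∈ Icc (0:ℝ) τ, clamp t = t := by
    intro t ht
    rw [hclampdef]
    simp only
    rw [min_eq_left ht.2, max_eq_right ht.1]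
  set π' : ℝ → EuclideanSpace ℝ (Fin n) := fun t => π₀ (clamp t) with hπ'
  have hπ'cont : Continuous π' := by
    apply hπ₀cont.comp_continuous
    · exact continuous_max.comp (continuous_const.prodMk
        (continuous_min.comp (continuous_id.prodMk continuous_const)))
    · exact hclampmem
  have hπ'eq : ∀ t ∈ Icc (0:ℝ) τ, π' t = π₀ t := by
    intro t ht
    rw [hπ']
    simp only
    rw [hclampeq t ht]
  have himg : ∀ t ∈ Ioc (0:ℝ) τ, ∃ u, F (π' t) u = g t := by
    intro t ht
    exact ⟨u₀ t, by rw [hπ'eq t (Ioc_subset_Icc_self ht)]⟩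
  -- constants
  set q₀ : ℝ := Φ a - Φ (π₀ τ) with hq₀
  have hq₀pos : 0 < q₀ := by rw [hq₀]; linarith
  set δs : ℝ := min (q₀ / 4) (β (Φ a) / 2) with hδs
  have hδspos : 0 < δs := lt_min (by linarith) (by linarith)
  -- uniform continuity of Φ on a compact tube around the trajectory
  set Tube : Set (EuclideanSpace ℝ (Fin n)) :=
    Metric.cthickening 1 (π' '' Icc 0 τ) with hTube
  have hTubecomp : IsCompact Tube :=
    (isCompact_Icc.image hπ'cont).cthickening
  have hΦuc := hTubecomp.uniformContinuousOn_of_continuous hΦcont.continuousOn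
  obtain ⟨η₀, hη₀pos, hη₀⟩ := (Metric.uniformContinuousOn_iff.1 hΦuc) δs hδspos
  set η : ℝ := min 1 η₀ with hη
  have hηpos : 0 < η := lt_min one_pos hη₀pos
  -- the approximation parameter
  set E : ℝ := Real.exp ((K:ℝ) * τ) with hE
  have hE1 : 1 ≤ E := by
    rw [hE]
    apply Real.one_le_exp
    positivity
  set ε' : ℝ := η / (2 * E + 1) with hε'
  have hε'pos : 0 < ε' := by rw [hε']; positivity
  obtain ⟨v, hvcont, hverr⟩ := approx_control hK hπ'cont hτ0 hgIoc himg hε'pos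
  -- the radius
  obtain ⟨ρ₂, hρ₂pos, hρ₂⟩ := Metric.continuousAt_iff.1 (hβΦ.continuousAt (x := a))
    (β (Φ a) / 4) (by linarith)
  refine ⟨q₀ / 2, by linarith, min ε' ρ₂, lt_min hε'pos hρ₂pos, ?_⟩
  intro y hy
  have hyε' : dist y a < ε' := lt_of_lt_of_le hy (min_le_left _ _)
  have hyρ₂ : dist y a < ρ₂ := lt_of_lt_of_le hy (min_le_right _ _)
  -- solve the ODE from y with the continuous control v
  obtain ⟨z, hz0, hzc, hzeq⟩ := solve_ode hK hvcont hτ0 hsmall y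
  refine ⟨v, z, hz0, hzeq, ?_⟩
  -- Grönwall estimate
  have hFzv_cont : ContinuousOn (fun r => F (z r) (v r)) (Icc 0 τ) :=
    by have h := hK.continuous.comp_continuousOn' (hzc.prodMk hvcont.continuousOn); exact h
  have hFπv_cont : ContinuousOn (fun r => F (π₀ r) (v r)) (Icc 0 τ) :=
    by have h := hK.continuous.comp_continuousOn' (hπ₀cont.prodMk hvcont.continuousOn); exact h
  have herr2 : ∫ r in (0:ℝ)..τ, ‖F (π₀ r) (v r) - g r‖ ≤ ε' := by
    rw [intervalIntegral.integral_of_le hτ0.le]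
    calc ∫ r in Ioc (0:ℝ) τ, ‖F (π₀ r) (v r) - g r‖
        = ∫ r in Ioc (0:ℝ) τ, ‖F (π' r) (v r) - g r‖ := by
          apply setIntegral_congr_fun measurableSet_Ioc
          intro r hr
          show ‖F (π₀ r) (v r) - g r‖ = ‖F (π' r) (v r) - g r‖
          rw [hπ'eq r (Ioc_subset_Icc_self hr)]
    _ ≤ ε' := hverr
  have hFπvI : IntegrableOn (fun r => F (π₀ r) (v r)) (Ioc 0 τ) :=
    hFπv_cont.integrableOn_Icc.mono_set Ioc_subset_Icc_self
  have herrI : IntegrableOn (fun r => ‖F (π₀ r) (v r) - g r‖) (Ioc 0 τ) :=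
    (hFπvI.sub hgIoc).norm
  -- the Grönwall inequality for the distance of the two trajectories
  have hgr : ∀ t ∈ Icc (0:ℝ) τ, ‖z t - π₀ t‖ ≤ (dist y a + ε') * Real.exp ((K:ℝ) * t) := by
    apply gronwall_integral (K.2) (by positivity)
      ((hzc.sub hπ₀cont).norm)
      (fun t ht => norm_nonneg _)
    intro t ht
    have hsub : z t - π₀ t = (y - a) +
        ((∫ r in (0:ℝ)..t, (F (z r) (v r) - F (π₀ r) (v r))) +
          ∫ r in (0:ℝ)..t, (F (π₀ r) (v r) - g r)) := by
      have h1 := hzeq t ht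
      have h2 := heq t ht
      have hzint : IntervalIntegrable (fun r => F (z r) (v r)) volume 0 t := by
        apply ContinuousOn.intervalIntegrable
        rw [uIcc_of_le ht.1]
        exact hFzv_cont.mono (Icc_subset_Icc le_rfl ht.2)
      have hπvint : IntervalIntegrable (fun r => F (π₀ r) (v r)) volume 0 t := by
        apply ContinuousOn.intervalIntegrable
        rw [uIcc_of_le ht.1]
        exact hFπv_cont.mono (Icc_subset_Icc le_rfl ht.2)
      have hgint : IntervalIntegrable g volume 0 t :=
        hgI.mono_set (by rw [uIcc_of_le ht.1, uIcc_of_le hτ0.le]; exact Icc_subset_Icc le_rfl ht.2)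
      rw [intervalIntegral.integral_sub hzint hπvint,
        intervalIntegral.integral_sub hπvint hgint]
      rw [h1, h2]
      abel
    have hb1 : ‖∫ r in (0:ℝ)..t, (F (z r) (v r) - F (π₀ r) (v r))‖ ≤
        (K:ℝ) * ∫ r in (0:ℝ)..t, ‖z r - π₀ r‖ := by
      calc ‖∫ r in (0:ℝ)..t, (F (z r) (v r) - F (π₀ r) (v r))‖
          ≤ ∫ r in (0:ℝ)..t, ‖F (z r) (v r) - F (π₀ r) (v r)‖ :=
            intervalIntegral.norm_integral_le_integral_norm ht.1
      _ ≤ ∫ r in (0:ℝ)..t, (K:ℝ) * ‖z r - π₀ r‖ := by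
            apply intervalIntegral.integral_mono_on ht.1
            · apply ContinuousOn.intervalIntegrable
              rw [uIcc_of_le ht.1]
              exact ((hFzv_cont.mono (Icc_subset_Icc le_rfl ht.2)).sub
                (hFπv_cont.mono (Icc_subset_Icc le_rfl ht.2))).norm
            · apply ContinuousOn.intervalIntegrable
              rw [uIcc_of_le ht.1]
              exact (((hzc.mono (Icc_subset_Icc le_rfl ht.2)).sub
                (hπ₀cont.mono (Icc_subset_Icc le_rfl ht.2))).norm).const_smul ((K:ℝ))
            · intro r hr
              have := (lipFst hK (v r)).dist_le_mul (z r) (π₀ r)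
              simpa [dist_eq_norm] using this
      _ = (K:ℝ) * ∫ r in (0:ℝ)..t, ‖z r - π₀ r‖ := by
            rw [← intervalIntegral.integral_const_mul]
    have hb2 : ‖∫ r in (0:ℝ)..t, (F (π₀ r) (v r) - g r)‖ ≤ ε' := by
      calc ‖∫ r in (0:ℝ)..t, (F (π₀ r) (v r) - g r)‖
          ≤ ∫ r in (0:ℝ)..t, ‖F (π₀ r) (v r) - g r‖ :=
            intervalIntegral.norm_integral_le_integral_norm ht.1
      _ ≤ ∫ r in (0:ℝ)..τ, ‖F (π₀ r) (v r) - g r‖ := by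
            apply intervalIntegral.integral_mono_interval le_rfl ht.1 ht.2
            · exact Eventually.of_forall fun r => norm_nonneg _
            · rw [intervalIntegrable_iff_integrableOn_Ioc_of_le hτ0.le]
              exact herrI
      _ ≤ ε' := herr2
    calc ‖z t - π₀ t‖ = ‖(y - a) +
        ((∫ r in (0:ℝ)..t, (F (z r) (v r) - F (π₀ r) (v r))) +
          ∫ r in (0:ℝ)..t, (F (π₀ r) (v r) - g r))‖ := by rw [← hsub]
    _ ≤ ‖y - a‖ + (‖∫ r in (0:ℝ)..t, (F (z r) (v r) - F (π₀ r) (v r))‖ +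
          ‖∫ r in (0:ℝ)..t, (F (π₀ r) (v r) - g r)‖) :=
        (norm_add_le _ _).trans (add_le_add le_rfl (norm_add_le _ _))
    _ ≤ (dist y a + ε') + (K:ℝ) * ∫ r in (0:ℝ)..t, ‖z r - π₀ r‖ := by
        rw [dist_eq_norm]
        linarith [hb1, hb2]
  -- distance bound
  have hdistb : ∀ t ∈ Icc (0:ℝ) τ, dist (z t) (π₀ t) < η := by
    intro t ht
    have h1 := hgr t ht
    have h2 : Real.exp ((K:ℝ) * t) ≤ E := by
      rw [hE]
      apply Real.exp_le_exp.2
      exact mul_le_mul_of_nonneg_left ht.2 K.2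
    have h3 : dist y a + ε' < 2 * ε' := by linarith [hyε']
    have h4 : (dist y a + ε') * Real.exp ((K:ℝ) * t) < 2 * ε' * E := by
      have hEpos : (0:ℝ) < E := lt_of_lt_of_le one_pos hE1
      have ha1 : (dist y a + ε') * Real.exp ((K:ℝ) * t) ≤ (dist y a + ε') * E :=
        mul_le_mul_of_nonneg_left h2 (by positivity)
      have ha2 : (dist y a + ε') * E < 2 * ε' * E := mul_lt_mul_of_pos_right h3 hEpos
      linarith
    have h5 : 2 * ε' * E < η := by
      have h2E : (0:ℝ) < 2 * E + 1 := by positivity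
      have hd : ε' * (2 * E + 1) = η := by
        rw [hε']
        field_simp
      nlinarith [hε'pos]
    rw [dist_eq_norm]
    calc ‖z t - π₀ t‖ ≤ (dist y a + ε') * Real.exp ((K:ℝ) * t) := h1
    _ < η := by linarith
  -- membership in the tube and closeness of Φ values
  have hmemπ : ∀ t ∈ Icc (0:ℝ) τ, π₀ t ∈ Tube := by
    intro t ht
    rw [hTube]
    apply Metric.self_subset_cthickening
    exact ⟨t, ht, (hπ'eq t ht)⟩
  have hmemz : ∀ t ∈ Icc (0:ℝ) τ, z t ∈ Tube := by
    intro t ht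
    rw [hTube]
    apply Metric.mem_cthickening_of_dist_le (z t) (π₀ t) 1 (π' '' Icc 0 τ)
      ⟨t, ht, (hπ'eq t ht)⟩
    exact le_trans (hdistb t ht).le (le_trans (min_le_left _ _) le_rfl)
  have hΦclose : ∀ t ∈ Icc (0:ℝ) τ, |Φ (z t) - Φ (π₀ t)| < δs := by
    intro t ht
    have := hη₀ (z t) (hmemz t ht) (π₀ t) (hmemπ t ht)
      (lt_of_lt_of_le (hdistb t ht) (min_le_right _ _))
    rwa [Real.dist_eq] at this
  have hΦya : |Φ y - Φ a| < δs := by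
    have := hΦclose 0 ⟨le_rfl, hτ0.le⟩
    rwa [hz0, hπ00] at this
  have hβy : (3/4) * β (Φ a) < β (Φ y) := by
    have := hρ₂ hyρ₂
    rw [Real.dist_eq] at this
    have habs := abs_lt.1 this
    linarith [habs.1]
  constructor
  · -- endpoint decrease
    have h1 := hΦclose τ ⟨hτ0.le, le_rfl⟩
    have h2 := abs_lt.1 h1
    have h3 := abs_lt.1 hΦya
    have hδq : δs ≤ q₀ / 4 := min_le_left _ _
    have : Φ (z τ) < Φ (π₀ τ) + δs := by linarith [h2.2]
    have hπτ : Φ (π₀ τ) = Φ a - q₀ := by rw [hq₀]; ring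
    linarith [h3.2]
  · -- running bound
    intro t ht
    have h1 := abs_lt.1 (hΦclose t ht)
    have h2 := hbd t ht
    have hδβ : δs ≤ β (Φ a) / 2 := min_le_right _ _
    have : Φ (z t) < β (Φ a) + β (Φ a) / 2 := by linarith [h1.2]
    linarith [hβy]

end Auxiliary

/-- The key step (2.10)–(2.11) in the proof of Proposition 1: under hypotheses (2.2)–(2.3),
with `β̄ := 2β`, for every `σ > 0` there exist a lower semicontinuous map
`T : D₂ \ D₁ → (0, σ]` and a map `q̄ : D₂ \ D₁ → (0,∞)` with `liminf_{x→a} q̄(x) > 0` for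
every `a ∈ D₂ \ D₁`, such that for every `x ∈ D₂ \ D₁` there is a control with
`Φ(π(T x)) ≤ Φ(x) − q̄(x)` and `Φ(π(t)) ≤ β̄(Φ(x))` on `[0, T x]`. -/
theorem covering_step {n l : ℕ}
    (F : EuclideanSpace ℝ (Fin n) → EuclideanSpace ℝ (Fin l) → EuclideanSpace ℝ (Fin n))
    (hFlip : ∃ K : NNReal, LipschitzWith K (Function.uncurry F))
    (hF0 : F 0 0 = 0)
    (D₁ D₂ : Set (EuclideanSpace ℝ (Fin n)))
    (hD₁closed : IsClosed D₁) (h0D₁ : (0 : EuclideanSpace ℝ (Fin n)) ∈ D₁)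
    (hD₂open : IsOpen D₂) (hD₁D₂ : D₁ ⊆ D₂)
    (L₁ L₂ : EReal) (hL₁ : 0 ≤ L₁) (hL₁₂ : L₁ < L₂)
    (Φ : EuclideanSpace ℝ (Fin n) → ℝ) (hΦcont : Continuous Φ) (hΦnonneg : ∀ x, 0 ≤ Φ x)
    (h22a : ∀ x ∈ D₁, (Φ x : EReal) ≤ L₁)
    (h22b : ∀ x ∈ D₂ \ D₁, 0 < Φ x ∧ (Φ x : EReal) < L₂)
    (h22c : ∀ x, x ∉ D₂ → L₂ ≤ (Φ x : EReal))
    (h22d : ∀ x ∈ frontier D₂, (Φ x : EReal) = L₂)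
    (h22e : ∀ xs : ℕ → EuclideanSpace ℝ (Fin n), (∀ ν, xs ν ∈ D₂ \ D₁) →
      Tendsto (fun ν => ‖xs ν‖) atTop atTop →
      Filter.limsup (fun ν => (Φ (xs ν) : EReal)) atTop = L₂)
    (β : ℝ → ℝ) (hβ : IsClassK β)
    (h23 : ∀ σ > (0:ℝ), ∀ x ∈ D₂ \ D₁, ∃ τ ∈ Set.Ioc (0:ℝ) σ,
      ∃ u : ℝ → EuclideanSpace ℝ (Fin l), ∃ π : ℝ → EuclideanSpace ℝ (Fin n),
        π 0 = x ∧
        (∀ t ∈ Set.Icc (0:ℝ) τ, π t = x + ∫ r in (0:ℝ)..t, F (π r) (u r)) ∧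
        Φ (π τ) < Φ x ∧
        (∀ t ∈ Set.Icc (0:ℝ) τ, Φ (π t) ≤ β (Φ x))) :
    ∀ σ > (0:ℝ),
      ∃ T : EuclideanSpace ℝ (Fin n) → ℝ,
      ∃ qbar : EuclideanSpace ℝ (Fin n) → ℝ,
        LowerSemicontinuousOn T (D₂ \ D₁) ∧
        (∀ x ∈ D₂ \ D₁, 0 < T x ∧ T x ≤ σ) ∧
        (∀ x ∈ D₂ \ D₁, 0 < qbar x) ∧
        (∀ a ∈ D₂ \ D₁, ∃ ε > (0:ℝ), ∀ᶠ x in nhdsWithin a (D₂ \ D₁), ε ≤ qbar x) ∧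
        ∀ x ∈ D₂ \ D₁,
          ∃ u : ℝ → EuclideanSpace ℝ (Fin l), ∃ π : ℝ → EuclideanSpace ℝ (Fin n),
            π 0 = x ∧
            (∀ t ∈ Set.Icc (0:ℝ) (T x), π t = x + ∫ r in (0:ℝ)..t, F (π r) (u r)) ∧
            Φ (π (T x)) ≤ Φ x - qbar x ∧
            (∀ t ∈ Set.Icc (0:ℝ) (T x), Φ (π t) ≤ 2 * β (Φ x)) := by
  intro σ hσ
  classical
  set S : Set (EuclideanSpace ℝ (Fin n)) := D₂ \ D₁ with hS
  obtain ⟨K₀, hK₀⟩ := hFlip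
  set K : NNReal := K₀ + 1 with hKdef
  have hK : LipschitzWith K (Function.uncurry F) := hK₀.weaken (by simp [hKdef])
  have hKpos : (0:ℝ) < (K:ℝ) := by
    rw [hKdef]
    push_cast
    positivity
  set σ' : ℝ := min σ (1/(2*(K:ℝ))) with hσ'def
  have hσ'pos : 0 < σ' := lt_min hσ (by positivity)
  have hσ'σ : σ' ≤ σ := min_le_left _ _
  have hβΦ : Continuous fun x => β (Φ x) :=
    hβ.1.comp_continuous hΦcont hΦnonneg
  -- the key local property at every point of S
  have KEY : ∀ a ∈ S, ∃ τ ∈ Ioc (0:ℝ) σ', ∃ q > (0:ℝ), ∃ ρ > (0:ℝ), ∀ y, dist y a < ρ →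
      ∃ v : ℝ → EuclideanSpace ℝ (Fin l), ∃ z : ℝ → EuclideanSpace ℝ (Fin n),
        z 0 = y ∧ (∀ t ∈ Icc (0:ℝ) τ, z t = y + ∫ r in (0:ℝ)..t, F (z r) (v r)) ∧
        Φ (z τ) ≤ Φ y - q ∧ ∀ t ∈ Icc (0:ℝ) τ, Φ (z t) ≤ 2 * β (Φ y) := by
    intro a ha
    obtain ⟨τ, hτ, u₀, π₀, hπ00, heq, hdec, hbd⟩ := h23 σ' hσ'pos a ha
    have hsmall : (K:ℝ) * τ ≤ 1/2 := by
      have h1 : τ ≤ 1/(2*(K:ℝ)) := le_trans hτ.2 (min_le_right _ _)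
      calc (K:ℝ) * τ ≤ (K:ℝ) * (1/(2*(K:ℝ))) := mul_le_mul_of_nonneg_left h1 hKpos.le
      _ = 1/2 := by
          have hKne : (K:ℝ) ≠ 0 := ne_of_gt hKpos
          field_simp
    have hΦapos : 0 < Φ a := (h22b a ha).1
    have hβa : 0 < β (Φ a) := by
      have := hβ.2.1 (self_mem_Ici) (show Φ a ∈ Ici (0:ℝ) from hΦnonneg a) hΦapos
      rwa [hβ.2.2] at this
    obtain ⟨q, hq, ρ, hρ, H⟩ := key_point hK hΦcont hβΦ hτ.1 hsmall hπ00 heq hdec hbd hβa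
    exact ⟨τ, hτ, q, hq, ρ, hρ, H⟩
  -- choice
  choose τf hτf qf hqf ρf hρf Hf using fun p : ↥S => KEY p.1 p.2
  -- locally finite refinement of the cover by balls in the subtype
  set uball : ↥S → Set ↥S := fun p => Metric.ball p (ρf p) with huball
  have hucov : ⋃ p, uball p = univ := by
    apply eq_univ_iff_forall.2
    intro p
    exact mem_iUnion.2 ⟨p, Metric.mem_ball_self (hρf p)⟩
  obtain ⟨vv, hvopen, hvcov, hvlf, hvsub⟩ :=
    precise_refinement uball (fun p => Metric.isOpen_ball) hucov
  have hIne : ∀ p : ↥S, ∃ a, p ∈ vv a := by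
    intro p
    have : p ∈ ⋃ a, vv a := by rw [hvcov]; trivial
    exact mem_iUnion.1 this
  have hIfin : ∀ p : ↥S, {a | p ∈ vv a}.Finite := fun p => hvlf.point_finite p
  have hFinsetNe : ∀ p : ↥S, ((hIfin p).toFinset).Nonempty := by
    intro p
    obtain ⟨a, ha⟩ := hIne p
    exact ⟨a, (Set.Finite.mem_toFinset _).2 ha⟩
  set T0 : ↥S → ℝ := fun p => (((hIfin p).toFinset).image τf).max' ((hFinsetNe p).image τf)
    with hT0
  set q0 : ↥S → ℝ := fun p => (((hIfin p).toFinset).image qf).min' ((hFinsetNe p).image qf)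
    with hq0
  set T : EuclideanSpace ℝ (Fin n) → ℝ := fun x => if hx : x ∈ S then T0 ⟨x, hx⟩ else σ with hT
  set qbar : EuclideanSpace ℝ (Fin n) → ℝ :=
    fun x => if hx : x ∈ S then q0 ⟨x, hx⟩ else 1 with hqbar
  -- basic facts
  have hT0mem : ∀ p : ↥S, ∃ a, p ∈ vv a ∧ τf a = T0 p := by
    intro p
    have := (((hIfin p).toFinset).image τf).max'_mem ((hFinsetNe p).image τf)
    rw [Finset.mem_image] at this
    obtain ⟨a, ha, hta⟩ := this
    exact ⟨a, (Set.Finite.mem_toFinset (hIfin p)).1 ha, hta⟩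
  have hT0ge : ∀ p : ↥S, ∀ a, p ∈ vv a → τf a ≤ T0 p := by
    intro p a ha
    apply Finset.le_max'
    exact Finset.mem_image_of_mem τf ((Set.Finite.mem_toFinset _).2 ha)
  have hq0mem : ∀ p : ↥S, ∃ a, p ∈ vv a ∧ qf a = q0 p := by
    intro p
    have := (((hIfin p).toFinset).image qf).min'_mem ((hFinsetNe p).image qf)
    rw [Finset.mem_image] at this
    obtain ⟨a, ha, hta⟩ := this
    exact ⟨a, (Set.Finite.mem_toFinset (hIfin p)).1 ha, hta⟩
  have hq0le : ∀ p : ↥S, ∀ a, p ∈ vv a → q0 p ≤ qf a := by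
    intro p a ha
    apply Finset.min'_le
    exact Finset.mem_image_of_mem qf ((Set.Finite.mem_toFinset _).2 ha)
  have hTS : ∀ x (hx : x ∈ S), T x = T0 ⟨x, hx⟩ := by
    intro x hx; rw [hT]; simp only [dif_pos hx]
  have hqS : ∀ x (hx : x ∈ S), qbar x = q0 ⟨x, hx⟩ := by
    intro x hx; rw [hqbar]; simp only [dif_pos hx]
  refine ⟨T, qbar, ?_, ?_, ?_, ?_, ?_⟩
  · -- lower semicontinuity
    intro x hx b hb
    rw [hTS x hx] at hb
    obtain ⟨a, hpa, hta⟩ := hT0mem ⟨x, hx⟩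
    obtain ⟨O, hOopen, hOpre⟩ := isOpen_induced_iff.1 (hvopen a)
    have hxO : x ∈ O := by
      have : (⟨x, hx⟩ : ↥S) ∈ (Subtype.val) ⁻¹' O := by rw [hOpre]; exact hpa
      exact this
    have hmem : O ∩ S ∈ nhdsWithin x S :=
      inter_mem (mem_nhdsWithin_of_mem_nhds (hOopen.mem_nhds hxO)) self_mem_nhdsWithin
    filter_upwards [hmem] with z hz
    have hzS : z ∈ S := hz.2
    have hzvv : (⟨z, hzS⟩ : ↥S) ∈ vv a := by
      rw [← hOpre]; exact hz.1
    have := hT0ge ⟨z, hzS⟩ a hzvv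
    rw [hTS z hzS]
    calc b < T0 ⟨x, hx⟩ := hb
    _ = τf a := hta.symm
    _ ≤ T0 ⟨z, hzS⟩ := this
  · -- bounds on T
    intro x hx
    rw [hTS x hx]
    constructor
    · obtain ⟨a, _, hta⟩ := hT0mem ⟨x, hx⟩
      rw [← hta]
      exact (hτf a).1
    · apply Finset.max'_le
      intro y hy
      rw [Finset.mem_image] at hy
      obtain ⟨a, _, rfl⟩ := hy
      exact le_trans (hτf a).2 hσ'σ
  · -- positivity of qbar
    intro x hx
    rw [hqS x hx]
    obtain ⟨a, _, hta⟩ := hq0mem ⟨x, hx⟩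
    rw [← hta]
    exact hqf a
  · -- local lower bound on qbar
    intro x hx
    set p : ↥S := ⟨x, hx⟩ with hp
    have hJfin : {a | p ∈ closure (vv a)}.Finite := hvlf.closure.point_finite p
    have hJne : (hJfin.toFinset).Nonempty := by
      obtain ⟨a, ha⟩ := hIne p
      exact ⟨a, (Set.Finite.mem_toFinset _).2 (subset_closure ha)⟩
    set ε : ℝ := ((hJfin.toFinset).image qf).min' (hJne.image qf) with hε
    have hεpos : 0 < ε := by
      have := ((hJfin.toFinset).image qf).min'_mem (hJne.image qf)
      rw [Finset.mem_image] at this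
      obtain ⟨a, _, hta⟩ := this
      rw [hε, ← hta]
      exact hqf a
    refine ⟨ε, hεpos, ?_⟩
    obtain ⟨N, hNmem, hNfin⟩ := hvlf p
    set Bad : Finset ↥S := (hNfin.toFinset).filter (fun a => p ∉ closure (vv a)) with hBad
    set N' : Set ↥S := N ∩ ⋂ a ∈ Bad, (closure (vv a))ᶜ with hN'
    have hN'mem : N' ∈ nhds p := by
      apply inter_mem hNmem
      apply (Filter.biInter_finset_mem Bad).2
      intro a ha
      rw [hBad, Finset.mem_filter] at ha
      exact (isClosed_closure.isOpen_compl).mem_nhds ha.2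
    have hkey : ∀ z : ↥S, z ∈ N' → ε ≤ q0 z := by
      intro z hz
      apply Finset.le_min'
      intro y hy
      rw [Finset.mem_image] at hy
      obtain ⟨a, haz, rfl⟩ := hy
      have haz' : z ∈ vv a := (Set.Finite.mem_toFinset (hIfin z)).1 haz
      have haN : a ∈ hNfin.toFinset := by
        rw [Set.Finite.mem_toFinset]
        exact ⟨z, haz', hz.1⟩
      have hpcl : p ∈ closure (vv a) := by
        by_contra hcon
        have haBad : a ∈ Bad := by rw [hBad, Finset.mem_filter]; exact ⟨haN, hcon⟩
        have := hz.2
        rw [mem_iInter₂] at this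
        exact (this a haBad) (subset_closure haz')
      apply Finset.min'_le
      exact Finset.mem_image_of_mem qf ((Set.Finite.mem_toFinset _).2 hpcl)
    -- transfer to the ambient space
    rw [nhds_induced] at hN'mem
    obtain ⟨M, hMmem, hMsub⟩ := hN'mem
    have : M ∩ S ∈ nhdsWithin x S :=
      inter_mem (mem_nhdsWithin_of_mem_nhds hMmem) self_mem_nhdsWithin
    filter_upwards [this] with z hz
    have hzS : z ∈ S := hz.2
    rw [hqS z hzS]
    exact hkey ⟨z, hzS⟩ (hMsub hz.1)
  · -- achievability
    intro x hx
    set p : ↥S := ⟨x, hx⟩ with hp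
    obtain ⟨a, hpa, hta⟩ := hT0mem p
    have hdist : dist x a.1 < ρf a := by
      have := hvsub a hpa
      rw [huball] at this
      have h2 := this
      rw [Metric.mem_ball, Subtype.dist_eq] at h2
      exact h2
    obtain ⟨v, z, hz0, hzeq, hzdec, hzbd⟩ := Hf a x hdist
    refine ⟨v, z, hz0, ?_, ?_, ?_⟩
    · rw [hTS x hx, ← hta]
      exact hzeq
    · rw [hTS x hx, ← hta]
      calc Φ (z (τf a)) ≤ Φ x - qf a := hzdec
      _ ≤ Φ x - qbar x := by
          have := hq0le p a hpa
          rw [hqS x hx]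
          linarith
    · rw [hTS x hx, ← hta]
      exact hzbd
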